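/- Let (G,L) be a list-obstruction, and let X ⊆ V(G) be such that |L(x)| = 1 for every x ∈ X. Let L' be the list system obtained from L by updating with respect to X three times, and let (G',L') be a minimal list-obstruction induced by (G,L'). Then there exists an induced subgraph G'' of G such that (G'',L) is a list-obstruction (hence induces a minimal one) with |V(G'')| ≤ 36·|V(G')|. -/

import Mathlib

def ListColorableOn {V : Type*} (G : SimpleGraph V) (L : V → Finset ℕ) (S : Set V) : Prop :=
  ∃ c : V → ℕ, (∀ v ∈ S, c v ∈ L v) ∧ ∀ u ∈ S, ∀ w ∈ S, G.Adj u w → c u ≠ c w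

/-- `(G,L)` restricted to `S` is a minimal list-obstruction. -/
def MinimalListObstructionOn {V : Type*} (G : SimpleGraph V) (L : V → Finset ℕ)
    (S : Set V) : Prop :=
  ¬ ListColorableOn G L S ∧ ∀ T : Set V, T ⊂ S → ListColorableOn G L T

/-- One round of updating the lists with respect to a set `X` of colored vertices:
each vertex outside `X` loses the colors of its neighbors in `X` whose list is a
singleton, and afterwards every vertex whose list has size at most one joins `X`. -/
def updateOnce {V : Type*} [Fintype V] [DecidableEq V] (G : SimpleGraph V)
    [DecidableRel G.Adj] (p : (V → Finset ℕ) × Finset V) : (V → Finset ℕ) × Finset V :=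
  let L' : V → Finset ℕ := fun v =>
    if v ∈ p.2 then p.1 v
    else p.1 v \ (p.2.filter (fun x => G.Adj v x ∧ (p.1 x).card = 1)).biUnion p.1
  (L', p.2 ∪ Finset.univ.filter (fun v => (L' v).card ≤ 1))



section Aux

variable {V : Type*} [Fintype V] [DecidableEq V] (G : SimpleGraph V) [DecidableRel G.Adj]
  (L : V → Finset ℕ) (X : Finset V)

/-- Lists after `i` rounds of updating. -/
def LL (i : ℕ) : V → Finset ℕ := ((updateOnce G)^[i] (L, X)).1

/-- Colored set after `i` rounds of updating. -/
def XX (i : ℕ) : Finset V := ((updateOnce G)^[i] (L, X)).2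

lemma LL_succ (i : ℕ) (v : V) :
    LL G L X (i+1) v =
      if v ∈ XX G L X i then LL G L X i v
      else LL G L X i v \
        ((XX G L X i).filter (fun x => G.Adj v x ∧ (LL G L X i x).card = 1)).biUnion
          (LL G L X i) := by
  simp only [LL, XX, Function.iterate_succ_apply', updateOnce]
  rfl

lemma XX_succ (i : ℕ) :
    XX G L X (i+1) = XX G L X i ∪
      Finset.univ.filter (fun v => (LL G L X (i+1) v).card ≤ 1) := by
  simp only [LL, XX, Function.iterate_succ_apply', updateOnce]

lemma LL_succ_subset (i : ℕ) (v : V) : LL G L X (i+1) v ⊆ LL G L X i v := by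
  rw [LL_succ]
  split
  · exact Finset.Subset.refl _
  · exact Finset.sdiff_subset

lemma LL_subset (i : ℕ) (v : V) : LL G L X i v ⊆ L v := by
  induction i with
  | zero => exact Finset.Subset.refl _
  | succ n ih => exact (LL_succ_subset G L X n v).trans ih

lemma XX_subset_succ (i : ℕ) : XX G L X i ⊆ XX G L X (i+1) := by
  rw [XX_succ]; exact Finset.subset_union_left

lemma LL_succ_of_mem (i : ℕ) (v : V) (hv : v ∈ XX G L X i) :
    LL G L X (i+1) v = LL G L X i v := by
  rw [LL_succ, if_pos hv]

lemma witness_exists (i : ℕ) (v : V) (hv : v ∉ XX G L X i)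
    (k : ℕ) (hk : k ∈ LL G L X i v) (hk' : k ∉ LL G L X (i+1) v) :
    ∃ x, x ∈ XX G L X i ∧ G.Adj v x ∧ LL G L X i x = {k} := by
  rw [LL_succ, if_neg hv] at hk'
  have : k ∈ ((XX G L X i).filter
      (fun x => G.Adj v x ∧ (LL G L X i x).card = 1)).biUnion (LL G L X i) := by
    by_contra h
    exact hk' (Finset.mem_sdiff.2 ⟨hk, h⟩)
  obtain ⟨x, hx, hkx⟩ := Finset.mem_biUnion.1 this
  rw [Finset.mem_filter] at hx
  refine ⟨x, hx.1, hx.2.1, ?_⟩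
  obtain ⟨a, ha⟩ := Finset.card_eq_one.1 hx.2.2
  rw [ha] at hkx ⊢
  rw [Finset.mem_singleton] at hkx
  rw [hkx]

/-- The chosen witness for the removal of color `k` from `v`'s list at round `i`. -/
noncomputable def wit (i : ℕ) (v : V) (k : ℕ) : V :=
  if h : ∃ x, x ∈ XX G L X i ∧ G.Adj v x ∧ LL G L X i x = {k} then h.choose else v

lemma wit_spec (i : ℕ) (v : V) (k : ℕ)
    (h : ∃ x, x ∈ XX G L X i ∧ G.Adj v x ∧ LL G L X i x = {k}) :
    wit G L X i v k ∈ XX G L X i ∧ G.Adj v (wit G L X i v k) ∧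
      LL G L X i (wit G L X i v k) = {k} := by
  rw [wit, dif_pos h]
  exact h.choose_spec

/-- Force set: any proper `L`-coloring of a superset of `F i v` gives `v` a color in `LL i v`. -/
noncomputable def F : ℕ → V → Finset V
  | 0, v => {v}
  | (i+1), v => F i v ∪
      (LL G L X i v \ LL G L X (i+1) v).biUnion (fun k => F i (wit G L X i v k))

lemma F_subset_succ (i : ℕ) (v : V) : F G L X i v ⊆ F G L X (i+1) v :=
  Finset.subset_union_left

lemma mem_F_self (i : ℕ) (v : V) : v ∈ F G L X i v := by
  induction i with
  | zero => exact Finset.mem_singleton_self v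
  | succ n ih => exact F_subset_succ G L X n v ih

lemma force (i : ℕ) (v : V) (T : Set V) (c : V → ℕ)
    (hc1 : ∀ u ∈ T, c u ∈ L u) (hc2 : ∀ u ∈ T, ∀ w ∈ T, G.Adj u w → c u ≠ c w)
    (hFT : ↑(F G L X i v) ⊆ T) : c v ∈ LL G L X i v := by
  induction i generalizing v with
  | zero => exact hc1 v (hFT (by exact_mod_cast mem_F_self G L X 0 v))
  | succ n ih =>
    have hvT : v ∈ T := hFT (by exact_mod_cast mem_F_self G L X (n+1) v)
    have hFn : ↑(F G L X n v) ⊆ T :=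
      (Set.Subset.trans (by exact_mod_cast F_subset_succ G L X n v) hFT)
    have hcv : c v ∈ LL G L X n v := ih v hFn
    by_cases hv : v ∈ XX G L X n
    · rw [LL_succ_of_mem G L X n v hv]; exact hcv
    · by_contra hk'
      have hwex := witness_exists G L X n v hv (c v) hcv hk'
      obtain ⟨hxX, hadj, hsing⟩ := wit_spec G L X n v (c v) hwex
      set x := wit G L X n v (c v) with hxdef
      have hkD : c v ∈ LL G L X n v \ LL G L X (n+1) v := Finset.mem_sdiff.2 ⟨hcv, hk'⟩
      have hFx : ↑(F G L X n x) ⊆ T := by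
        refine Set.Subset.trans ?_ hFT
        intro y hy
        exact_mod_cast Finset.subset_union_right
          (Finset.subset_biUnion_of_mem (fun k => F G L X n (wit G L X n v k)) hkD
            (by exact_mod_cast hy))
      have hcx : c x ∈ LL G L X n x := ih x hFx
      rw [hsing, Finset.mem_singleton] at hcx
      have hxT : x ∈ T := hFx (by exact_mod_cast mem_F_self G L X n x)
      exact hc2 v hvT x hxT hadj hcx.symm

/-- `2^i - 1`, without natural subtraction. -/
def wsize : ℕ → ℕ
  | 0 => 0
  | (i+1) => 2 * wsize i + 1

lemma cardF (hsub : ∀ v, L v ⊆ ({1, 2, 3} : Finset ℕ)) (i : ℕ) (v : V) :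
    (F G L X i v).card + (LL G L X i v).card * wsize i ≤ 1 + (L v).card * wsize i := by
  induction i generalizing v with
  | zero => simp [F, wsize, LL]
  | succ n ih =>
    have hW : ∀ k ∈ LL G L X n v \ LL G L X (n+1) v,
        (F G L X n (wit G L X n v k)).card ≤ wsize (n+1) := by
      intro k hk
      by_cases hv : v ∈ XX G L X n
      · rw [LL_succ_of_mem G L X n v hv, Finset.sdiff_self] at hk
        exact absurd hk (Finset.notMem_empty k)
      · obtain ⟨hkk, hk'⟩ := Finset.mem_sdiff.1 hk
        obtain ⟨_, _, hsing⟩ := wit_spec G L X n v k (witness_exists G L X n v hv k hkk hk')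
        have h3 : (L (wit G L X n v k)).card ≤ 3 := by
          have := Finset.card_le_card (hsub (wit G L X n v k))
          simpa using this
        have hih := ih (wit G L X n v k)
        rw [hsing, Finset.card_singleton, one_mul] at hih
        have hm : (L (wit G L X n v k)).card * wsize n ≤ 3 * wsize n :=
          Nat.mul_le_mul_right _ h3
        simp only [wsize]
        omega
    have hstep : (F G L X (n+1) v).card ≤
        (F G L X n v).card + (LL G L X n v \ LL G L X (n+1) v).card * wsize (n+1) := by
      refine (Finset.card_union_le _ _).trans (Nat.add_le_add_left ?_ _)
      refine (Finset.card_biUnion_le).trans ?_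
      calc ∑ k ∈ LL G L X n v \ LL G L X (n+1) v, (F G L X n (wit G L X n v k)).card
          ≤ ∑ _k ∈ LL G L X n v \ LL G L X (n+1) v, wsize (n+1) :=
            Finset.sum_le_sum hW
        _ = (LL G L X n v \ LL G L X (n+1) v).card * wsize (n+1) := by
            rw [Finset.sum_const, smul_eq_mul]
    have hd : (LL G L X n v \ LL G L X (n+1) v).card + (LL G L X (n+1) v).card
        = (LL G L X n v).card := by
      rw [Finset.card_sdiff_of_subset (LL_succ_subset G L X n v)]
      have := Finset.card_le_card (LL_succ_subset G L X n v)
      omega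
    have hale : (LL G L X n v).card ≤ (L v).card :=
      Finset.card_le_card (LL_subset G L X n v)
    have hww : wsize n ≤ wsize (n+1) := by simp only [wsize]; omega
    obtain ⟨e, he⟩ : ∃ e, wsize (n+1) = wsize n + e := ⟨wsize (n+1) - wsize n, by omega⟩
    have hih := ih v
    calc (F G L X (n+1) v).card + (LL G L X (n+1) v).card * wsize (n+1)
        ≤ ((F G L X n v).card
            + (LL G L X n v \ LL G L X (n+1) v).card * wsize (n+1))
          + (LL G L X (n+1) v).card * wsize (n+1) := Nat.add_le_add_right hstep _
      _ = (F G L X n v).card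
          + ((LL G L X n v \ LL G L X (n+1) v).card + (LL G L X (n+1) v).card)
            * wsize (n+1) := by ring
      _ = (F G L X n v).card + (LL G L X n v).card * wsize (n+1) := by rw [hd]
      _ = ((F G L X n v).card + (LL G L X n v).card * wsize n)
          + (LL G L X n v).card * e := by rw [he]; ring
      _ ≤ (1 + (L v).card * wsize n) + (L v).card * e :=
          Nat.add_le_add hih (Nat.mul_le_mul_right _ hale)
      _ = 1 + (L v).card * wsize (n+1) := by rw [he]; ring

lemma cardF3 (hsub : ∀ v, L v ⊆ ({1, 2, 3} : Finset ℕ)) (v : V) :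
    (F G L X 3 v).card ≤ 22 := by
  have h := cardF G L X hsub 3 v
  have h3 : (L v).card ≤ 3 := by
    have := Finset.card_le_card (hsub v); simpa using this
  have hw : wsize 3 = 7 := by simp [wsize]
  rw [hw] at h
  omega

end Aux

theorem stmt_4 {V : Type*} [Fintype V] [DecidableEq V] (G : SimpleGraph V)
    [DecidableRel G.Adj] (L : V → Finset ℕ) (hsub : ∀ v, L v ⊆ ({1, 2, 3} : Finset ℕ))
    (hobs : ¬ ListColorableOn G L Set.univ)
    (X : Finset V) (hX : ∀ x ∈ X, (L x).card = 1)
    (L' : V → Finset ℕ) (hL' : L' = ((updateOnce G)^[3] (L, X)).1)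
    (S' : Set V) (hmin : MinimalListObstructionOn G L' S') :
    ∃ S'' : Set V, ¬ ListColorableOn G L S'' ∧ S''.ncard ≤ 36 * S'.ncard := by
  classical
  have hL3 : L' = LL G L X 3 := hL'
  set T : Finset V := S'.toFinset.biUnion (fun v => F G L X 3 v) with hT
  refine ⟨↑T, ?_, ?_⟩
  · rintro ⟨c, hc1, hc2⟩
    apply hmin.1
    refine ⟨c, ?_, ?_⟩
    · intro v hv
      rw [hL3]
      refine force G L X 3 v ↑T c hc1 hc2 ?_
      intro y hy
      exact_mod_cast Finset.subset_biUnion_of_mem (fun v => F G L X 3 v)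
        (Set.mem_toFinset.2 hv) (by exact_mod_cast hy)
    · intro u hu w hw hadj
      have huT : u ∈ (↑T : Set V) := by
        exact_mod_cast Finset.subset_biUnion_of_mem (fun v => F G L X 3 v)
          (Set.mem_toFinset.2 hu) (mem_F_self G L X 3 u)
      have hwT : w ∈ (↑T : Set V) := by
        exact_mod_cast Finset.subset_biUnion_of_mem (fun v => F G L X 3 v)
          (Set.mem_toFinset.2 hw) (mem_F_self G L X 3 w)
      exact hc2 u huT w hwT hadj
  · rw [Set.ncard_coe_finset, Set.ncard_eq_toFinset_card']
    calc T.card ≤ ∑ v ∈ S'.toFinset, (F G L X 3 v).card := Finset.card_biUnion_le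
      _ ≤ ∑ _v ∈ S'.toFinset, 22 := Finset.sum_le_sum (fun v _ => cardF3 G L X hsub v)
      _ = S'.toFinset.card * 22 := by rw [Finset.sum_const, smul_eq_mul]
      _ ≤ 36 * S'.toFinset.card := by omega
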